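/- Let {x_t} be generated by x_{t+1} = x_t ⊙ exp(−(1/(|1−α|+1)) x_t ⊙ ∇g_α(x_t)) with x₁ ∈ Δ^N_+. Then for any T ∈ N, f_α(x̄_{T+1}) − f_α(x*) ≤ (2(|1−α|+1)/T) · sup_t ‖x* ⊘ x_t − 1‖₂², where x* minimizes f_α over Δ^N_+ and x̄ = x/‖x‖₁. -/

import Mathlib

open scoped BigOperators

/-- `f_α(x) = E_p[D_α(p‖x)]` for a random probability vector `p` taking finitely many
values `p k` with probabilities `w k`, where
`D_α(q‖x) = (α-1)⁻¹ * log ⟨q^α, x^(1-α)⟩` (entrywise real powers). -/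
noncomputable def falpha {N M : ℕ} (α : ℝ) (w : Fin M → ℝ) (p : Fin M → Fin N → ℝ)
    (x : Fin N → ℝ) : ℝ :=
  ∑ k, w k * ((α - 1)⁻¹ * Real.log (∑ i, p k i ^ α * x i ^ (1 - α)))

/-- `g_α(x) = ⟨1, x⟩ + f_α(x)`. -/
noncomputable def galpha {N M : ℕ} (α : ℝ) (w : Fin M → ℝ) (p : Fin M → Fin N → ℝ)
    (x : Fin N → ℝ) : ℝ :=
  (∑ i, x i) + falpha α w p x


open Real Finset

lemma exp_le_quad_of_nonpos {u : ℝ} (hu : u ≤ 0) : Real.exp u ≤ 1 + u + u^2/2 := by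
  set G : ℝ → ℝ := fun u => 1 + u + u^2/2 - Real.exp u with hG
  have hd : ∀ s : ℝ, HasDerivAt G (1 + s - Real.exp s) s := by
    intro s
    have h1 : HasDerivAt (fun u : ℝ => 1 + u + u^2/2) (1 + s) s := by
      have := ((hasDerivAt_id s).const_add 1).fun_add ((hasDerivAt_pow 2 s).div_const 2)
      simpa using this.congr_deriv (by ring)
    simpa using h1.fun_sub (Real.hasDerivAt_exp s)
  have hanti : AntitoneOn G (Set.Iic 0) := by
    apply antitoneOn_of_deriv_nonpos (convex_Iic 0)
    · exact fun s _ => (hd s).continuousAt.continuousWithinAt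
    · exact fun s _ => (hd s).differentiableAt.differentiableWithinAt
    · intro s _
      rw [(hd s).deriv]
      have := Real.add_one_le_exp s
      linarith
  have := hanti hu (Set.self_mem_Iic) hu
  simp [hG] at this
  linarith

/-- For `u ≥ 0`, `1 - (1+u)·exp(-u) ≤ u²/2`. -/

lemma one_sub_exp_neg_le {u : ℝ} (hu : 0 ≤ u) : 1 - (1+u) * Real.exp (-u) ≤ u^2/2 := by
  set F : ℝ → ℝ := fun u => u^2/2 - 1 + (1+u) * Real.exp (-u) with hF
  have hd : ∀ s : ℝ, HasDerivAt F (s - s * Real.exp (-s)) s := by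
    intro s
    have he : HasDerivAt (fun u : ℝ => Real.exp (-u)) (-Real.exp (-s)) s := by
      simpa [Function.comp_def] using (Real.hasDerivAt_exp (-s)).comp s ((hasDerivAt_id s).neg)
    have h1 : HasDerivAt (fun u : ℝ => (1+u) * Real.exp (-u))
        (1 * Real.exp (-s) + (1+s) * (-Real.exp (-s))) s :=
      (((hasDerivAt_id s).const_add 1)).mul he
    have h2 : HasDerivAt (fun u : ℝ => u^2/2 - 1) s s := by
      have := ((hasDerivAt_pow 2 s).div_const 2).sub_const 1
      simpa using this.congr_deriv (by ring)
    simpa using (h2.fun_add h1).congr_deriv (by ring)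
  have hmono : MonotoneOn F (Set.Ici 0) := by
    apply monotoneOn_of_deriv_nonneg (convex_Ici 0)
    · exact fun s _ => (hd s).continuousAt.continuousWithinAt
    · exact fun s _ => (hd s).differentiableAt.differentiableWithinAt
    · intro s hs
      rw [(hd s).deriv]
      rw [interior_Ici] at hs
      have h1 : Real.exp (-s) ≤ 1 := Real.exp_le_one_iff.mpr (by linarith [hs.out])
      nlinarith [hs.out, Real.exp_pos (-s)]
  have := hmono (Set.self_mem_Ici) hu hu
  simp [hF] at this
  linarith

lemma expA {x u : ℝ} (hx0 : 0 < x) (hx1 : x ≤ 1) (hxu : x * Real.exp u ≤ 1) :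
    x * Real.exp u ≤ x + x*u + u^2/2 := by
  rcases le_or_gt u 0 with h | h
  · have := exp_le_quad_of_nonpos h
    nlinarith [sq_nonneg u]
  · have hx' : x ≤ Real.exp (-u) := by
      rw [Real.exp_neg]
      have := (le_div_iff₀ (Real.exp_pos u)).mpr hxu
      simpa [one_div] using this
    have h1 : 0 ≤ Real.exp u - 1 - u := by linarith [Real.add_one_le_exp u]
    have h2 : x * (Real.exp u - 1 - u) ≤ Real.exp (-u) * (Real.exp u - 1 - u) :=
      mul_le_mul_of_nonneg_right hx' h1
    have h3 : Real.exp (-u) * Real.exp u = 1 := by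
      rw [← Real.exp_add]; simp
    have h4 := one_sub_exp_neg_le h.le
    nlinarith

lemma quad_bound (f f' f'' : ℝ → ℝ) (K : ℝ)
    (hf : ∀ s, HasDerivAt f (f' s) s) (hf' : ∀ s, HasDerivAt f' (f'' s) s)
    (hK : ∀ s ∈ Set.Icc (0:ℝ) 1, f'' s ≤ K) :
    f 1 ≤ f 0 + f' 0 + K/2 := by
  set G : ℝ → ℝ := fun s => f 0 + f' 0 * s + K*s^2/2 - f s with hGdef
  set G' : ℝ → ℝ := fun s => f' 0 + K*s - f' s with hG'def
  have hdG : ∀ s, HasDerivAt G (G' s) s := by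
    intro s
    have h1 : HasDerivAt (fun s : ℝ => f 0 + f' 0 * s + K*s^2/2) (f' 0 + K*s) s := by
      have := (((hasDerivAt_id s).const_mul (f' 0)).const_add (f 0)).fun_add
        (((hasDerivAt_pow 2 s).const_mul K).div_const 2)
      simpa using this.congr_deriv (by ring)
    simpa [hG'def] using h1.fun_sub (hf s)
  have hdG' : ∀ s, HasDerivAt G' (K - f'' s) s := by
    intro s
    have h1 : HasDerivAt (fun s : ℝ => f' 0 + K*s) K s := by
      simpa using ((hasDerivAt_id s).const_mul K).const_add (f' 0)
    simpa using h1.fun_sub (hf' s)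
  have hmono' : MonotoneOn G' (Set.Icc 0 1) := by
    apply monotoneOn_of_deriv_nonneg (convex_Icc 0 1)
    · exact fun s _ => (hdG' s).continuousAt.continuousWithinAt
    · exact fun s _ => (hdG' s).differentiableAt.differentiableWithinAt
    · intro s hs
      rw [(hdG' s).deriv]
      have : s ∈ Set.Icc (0:ℝ) 1 := interior_subset hs
      linarith [hK s this]
  have hG'0 : G' 0 = 0 := by simp [hG'def]
  have hG'nonneg : ∀ s ∈ Set.Icc (0:ℝ) 1, 0 ≤ G' s := by
    intro s hs
    have := hmono' (Set.left_mem_Icc.mpr zero_le_one) hs hs.1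
    rwa [hG'0] at this
  have hmono : MonotoneOn G (Set.Icc 0 1) := by
    apply monotoneOn_of_deriv_nonneg (convex_Icc 0 1)
    · exact fun s _ => (hdG s).continuousAt.continuousWithinAt
    · exact fun s _ => (hdG s).differentiableAt.differentiableWithinAt
    · intro s hs
      rw [(hdG s).deriv]
      exact hG'nonneg s (interior_subset hs)
  have := hmono (Set.left_mem_Icc.mpr zero_le_one) (Set.right_mem_Icc.mpr zero_le_one)
    zero_le_one
  simp [hGdef] at this
  linarith

/-- LSE smoothness: for positive weights summing to 1,
`log ∑ q·e^v ≤ ∑ q·v + ‖v‖²/2`. -/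

lemma lse_smooth {N : ℕ} (q v : Fin N → ℝ) (hq : ∀ i, 0 < q i) (hq1 : ∑ i, q i = 1) :
    Real.log (∑ i, q i * Real.exp (v i)) ≤ (∑ i, q i * v i) + (∑ i, (v i)^2)/2 := by
  have hN : Nonempty (Fin N) := by
    by_contra h
    simp [not_nonempty_iff.mp h] at hq1
  set A : ℝ → ℝ := fun s => ∑ i, q i * Real.exp (s * v i) with hA
  set B : ℝ → ℝ := fun s => ∑ i, q i * v i * Real.exp (s * v i) with hB
  set Cc : ℝ → ℝ := fun s => ∑ i, q i * (v i)^2 * Real.exp (s * v i) with hCc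
  have hApos : ∀ s, 0 < A s := by
    intro s
    exact Finset.sum_pos (fun i _ => mul_pos (hq i) (Real.exp_pos _)) univ_nonempty
  have hexp : ∀ (c : ℝ) (s : ℝ), HasDerivAt (fun s => Real.exp (s * c)) (c * Real.exp (s*c)) s := by
    intro c s
    have := (Real.hasDerivAt_exp (s*c)).comp s (hasDerivAt_mul_const c)
    simpa [mul_comm, Function.comp_def] using this
  have hdA : ∀ s, HasDerivAt A (B s) s := by
    intro s
    apply HasDerivAt.fun_sum
    intro i _
    have := (hexp (v i) s).const_mul (q i)
    simpa using this.congr_deriv (by ring)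
  have hdB : ∀ s, HasDerivAt B (Cc s) s := by
    intro s
    apply HasDerivAt.fun_sum
    intro i _
    have := (hexp (v i) s).const_mul (q i * v i)
    simpa using this.congr_deriv (by ring)
  set f : ℝ → ℝ := fun s => Real.log (A s) with hf
  set f' : ℝ → ℝ := fun s => B s / A s with hf'
  set f'' : ℝ → ℝ := fun s => (Cc s * A s - B s * B s) / (A s)^2 with hf''
  have hdf : ∀ s, HasDerivAt f (f' s) s := by
    intro s
    have := (Real.hasDerivAt_log (hApos s).ne').comp s (hdA s)
    simpa [hf, hf', div_eq_inv_mul, Function.comp_def] using this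
  have hdf' : ∀ s, HasDerivAt f' (f'' s) s := by
    intro s
    exact (hdB s).div (hdA s) (hApos s).ne'
  have hbound : ∀ s ∈ Set.Icc (0:ℝ) 1, f'' s ≤ ∑ i, (v i)^2 := by
    intro s _
    have hCcA : Cc s ≤ (∑ i, (v i)^2) * A s := by
      rw [Finset.sum_mul]
      apply Finset.sum_le_sum
      intro i _
      have h1 : q i * Real.exp (s * v i) ≤ A s :=
        Finset.single_le_sum (f := fun j => q j * Real.exp (s * v j))
          (fun j _ => (mul_pos (hq j) (Real.exp_pos _)).le) (mem_univ i)
      calc q i * (v i)^2 * Real.exp (s * v i) = (v i)^2 * (q i * Real.exp (s * v i)) := by ring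
        _ ≤ (v i)^2 * A s := mul_le_mul_of_nonneg_left h1 (sq_nonneg _)
    have hA2 : (0:ℝ) < (A s)^2 := pow_pos (hApos s) 2
    rw [hf'', div_le_iff₀ hA2]
    nlinarith [sq_nonneg (B s), (hApos s)]
  have h := quad_bound f f' f'' (∑ i, (v i)^2) hdf hdf' hbound
  have hA0 : A 0 = 1 := by simp [hA, hq1]
  have hA1 : A 1 = ∑ i, q i * Real.exp (v i) := by simp [hA]
  have hB0 : B 0 = ∑ i, q i * v i := by simp [hB]
  simp only [hf, hf', hA0, hA1, hB0, Real.log_one, div_one, zero_add] at h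
  linarith

lemma jensen_log {N : ℕ} (q u : Fin N → ℝ) (hq : ∀ i, 0 ≤ q i) (hq1 : ∑ i, q i = 1)
    (hu : ∀ i, 0 < u i) : ∑ i, q i * Real.log (u i) ≤ Real.log (∑ i, q i * u i) := by
  set U := ∑ i, q i * u i with hU
  have hUpos : 0 < U := by
    have h1 : ∃ i ∈ (univ : Finset (Fin N)), 0 < q i := by
      by_contra h
      push_neg at h
      have : ∑ i, q i = 0 := Finset.sum_eq_zero (fun i hi => le_antisymm (h i hi) (hq i))
      rw [this] at hq1; norm_num at hq1
    obtain ⟨i, _, hi⟩ := h1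
    exact Finset.sum_pos' (fun j _ => mul_nonneg (hq j) (hu j).le)
      ⟨i, mem_univ i, mul_pos hi (hu i)⟩
  have key : ∀ i, q i * Real.log (u i) - q i * Real.log U ≤ q i * (u i / U - 1) := by
    intro i
    rw [← mul_sub, ← Real.log_div (hu i).ne' hUpos.ne']
    exact mul_le_mul_of_nonneg_left (Real.log_le_sub_one_of_pos (div_pos (hu i) hUpos)) (hq i)
  have hsum := Finset.sum_le_sum (fun i (_ : i ∈ univ) => key i)
  rw [Finset.sum_sub_distrib] at hsum
  have h2 : ∑ i, q i * (u i / U - 1) = 0 := by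
    have : ∑ i, q i * (u i / U - 1) = (∑ i, q i * u i) / U - ∑ i, q i := by
      rw [Finset.sum_div, ← Finset.sum_sub_distrib]
      congr 1; ext i; field_simp
    rw [this, ← hU, div_self hUpos.ne', hq1]; ring
  have h3 : ∑ i, q i * Real.log U = Real.log U := by
    rw [← Finset.sum_mul, hq1, one_mul]
  rw [h2, h3] at hsum
  linarith

/-- Bernoulli: for `0 ≤ β ≤ 1` and `t ≥ 0`, `t^β ≤ 1 + β*(t-1)`. -/

lemma rpow_le_one_add (t β : ℝ) (ht : 0 ≤ t) (hb0 : 0 ≤ β) (hb1 : β ≤ 1) :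
    t ^ β ≤ 1 + β * (t - 1) := by
  have := Real.geom_mean_le_arith_mean2_weighted hb0 (by linarith : (0:ℝ) ≤ 1 - β)
    ht zero_le_one (by ring)
  rw [Real.one_rpow, mul_one] at this
  linarith

lemma q_facts {N : ℕ} (α : ℝ) (c x : Fin N → ℝ) (hc : ∀ i, 0 < c i) (hx : ∀ i, 0 < x i)
    (hN : Nonempty (Fin N)) :
    (0 < ∑ i, c i * x i ^ (1 - α)) ∧
    (∀ i, 0 < c i * x i ^ (1-α) / (∑ j, c j * x j ^ (1 - α))) ∧
    (∑ i, c i * x i ^ (1-α) / (∑ j, c j * x j ^ (1 - α)) = 1) := by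
  have hS : 0 < ∑ j, c j * x j ^ (1 - α) :=
    Finset.sum_pos (fun j _ => mul_pos (hc j) (Real.rpow_pos_of_pos (hx j) _)) univ_nonempty
  refine ⟨hS, fun i => div_pos (mul_pos (hc i) (Real.rpow_pos_of_pos (hx i) _)) hS, ?_⟩
  rw [← Finset.sum_div, div_self hS.ne']

/-- Per-component convexity inequality. -/

lemma perk_conv {N : ℕ} (α : ℝ) (hα : 0 < α) (hα1 : α ≠ 1) (c x y : Fin N → ℝ)
    (hc : ∀ i, 0 < c i) (hx : ∀ i, 0 < x i) (hy : ∀ i, 0 < y i) (hN : Nonempty (Fin N)) :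
    -∑ i, (c i * x i ^ (-α) * (y i - x i)) / (∑ j, c j * x j ^ (1 - α)) ≤
      (α - 1)⁻¹ * (Real.log (∑ i, c i * y i ^ (1 - α)) -
        Real.log (∑ i, c i * x i ^ (1 - α))) := by
  obtain ⟨hS, hqpos, hq1⟩ := q_facts α c x hc hx hN
  set S := ∑ j, c j * x j ^ (1 - α) with hSdef
  set q : Fin N → ℝ := fun i => c i * x i ^ (1-α) / S with hqdef
  set t : Fin N → ℝ := fun i => y i / x i with htdef
  have ht : ∀ i, 0 < t i := fun i => div_pos (hy i) (hx i)
  have hSy : ∑ i, c i * y i ^ (1 - α) = S * ∑ i, q i * t i ^ (1-α) := by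
    rw [Finset.mul_sum]
    apply Finset.sum_congr rfl
    intro i _
    have hyi : y i = x i * t i := by
      show y i = x i * (y i / x i)
      rw [mul_comm]
      exact (div_mul_cancel₀ (y i) (hx i).ne').symm
    rw [hyi, Real.mul_rpow (hx i).le (ht i).le, hqdef]
    field_simp
  set Z := ∑ i, q i * t i ^ (1-α) with hZdef
  have hZpos : 0 < Z :=
    Finset.sum_pos (fun i _ => mul_pos (hqpos i) (Real.rpow_pos_of_pos (ht i) _)) univ_nonempty
  have hlogdiff : Real.log (∑ i, c i * y i ^ (1 - α)) - Real.log S = Real.log Z := by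
    rw [hSy, Real.log_mul hS.ne' hZpos.ne']
    ring
  have hlin : ∑ i, (c i * x i ^ (-α) * (y i - x i)) / S = ∑ i, q i * (t i - 1) := by
    apply Finset.sum_congr rfl
    intro i _
    have h1 : x i ^ (-α) * x i = x i ^ (1-α) := by
      rw [sub_eq_add_neg, Real.rpow_add (hx i), Real.rpow_one, mul_comm]
    have h2 : x i ^ (-α) * y i = x i ^ (1-α) * t i := by
      have hyi : y i = x i * t i := by
        show y i = x i * (y i / x i)
        rw [mul_comm]
        exact (div_mul_cancel₀ (y i) (hx i).ne').symm
      rw [hyi, ← mul_assoc, h1]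
    rw [hqdef]
    show _ = c i * x i ^ (1 - α) / S * (t i - 1)
    rw [div_mul_eq_mul_div, div_eq_div_iff hS.ne' hS.ne']
    linear_combination (c i * S) * h2 - (c i * S) * h1
  rw [hlogdiff, hlin]
  -- goal: -∑ q (t-1) ≤ (α-1)⁻¹ * log Z
  rcases lt_or_gt_of_ne hα1 with hlt | hgt
  · -- α < 1
    have hb : Z ≤ 1 + (1-α) * ∑ i, q i * (t i - 1) := by
      have hper : ∀ i, q i * t i ^ (1-α) ≤ q i * (1 + (1-α)*(t i - 1)) := by
        intro i
        exact mul_le_mul_of_nonneg_left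
          (rpow_le_one_add (t i) (1-α) (ht i).le (by linarith) (by linarith)) (hqpos i).le
      calc Z ≤ ∑ i, q i * (1 + (1-α)*(t i - 1)) := Finset.sum_le_sum (fun i _ => hper i)
        _ = (∑ i, q i) + (1-α) * ∑ i, q i * (t i - 1) := by
            rw [Finset.mul_sum, ← Finset.sum_add_distrib]
            exact Finset.sum_congr rfl (fun i _ => by ring)
        _ = 1 + (1-α) * ∑ i, q i * (t i - 1) := by rw [hq1]
    have hlog : Real.log Z ≤ (1-α) * ∑ i, q i * (t i - 1) := by
      calc Real.log Z ≤ Z - 1 := Real.log_le_sub_one_of_pos hZpos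
        _ ≤ (1-α) * ∑ i, q i * (t i - 1) := by linarith
    have hne : (α:ℝ) - 1 ≠ 0 := sub_ne_zero.mpr hα1
    have hneg : (α-1)⁻¹ < 0 := inv_lt_zero.mpr (by linarith)
    have := mul_le_mul_of_nonpos_left hlog hneg.le
    have heq : (α-1)⁻¹ * ((1-α) * ∑ i, q i * (t i - 1)) = -∑ i, q i * (t i - 1) := by
      field_simp
      ring
    linarith [heq ▸ this]
  · -- α > 1
    have hjen : ∑ i, q i * Real.log (t i ^ (1-α)) ≤ Real.log Z :=
      jensen_log q (fun i => t i ^ (1-α)) (fun i => (hqpos i).le) hq1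
        (fun i => Real.rpow_pos_of_pos (ht i) _)
    have hlogt : ∀ i, q i * Real.log (t i ^ (1-α)) = q i * ((1-α) * Real.log (t i)) := by
      intro i
      rw [Real.log_rpow (ht i)]
    have hper : ∀ i, q i * ((1-α) * Real.log (t i)) ≥ q i * ((1-α) * (t i - 1)) := by
      intro i
      apply mul_le_mul_of_nonneg_left _ (hqpos i).le
      have := Real.log_le_sub_one_of_pos (ht i)
      nlinarith
    have hlog : (1-α) * ∑ i, q i * (t i - 1) ≤ Real.log Z := by
      calc (1-α) * ∑ i, q i * (t i - 1) = ∑ i, q i * ((1-α) * (t i - 1)) := by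
            rw [Finset.mul_sum]; exact Finset.sum_congr rfl (fun i _ => by ring)
        _ ≤ ∑ i, q i * ((1-α) * Real.log (t i)) := Finset.sum_le_sum (fun i _ => hper i)
        _ = ∑ i, q i * Real.log (t i ^ (1-α)) := by
            exact Finset.sum_congr rfl (fun i _ => (hlogt i).symm)
        _ ≤ Real.log Z := hjen
    have hne : (α:ℝ) - 1 ≠ 0 := sub_ne_zero.mpr hα1
    have hposi : 0 < (α-1)⁻¹ := inv_pos.mpr (by linarith)
    have := mul_le_mul_of_nonneg_left hlog hposi.le
    have heq : (α-1)⁻¹ * ((1-α) * ∑ i, q i * (t i - 1)) = -∑ i, q i * (t i - 1) := by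
      field_simp
      ring
    linarith [heq ▸ this]

lemma perk_smooth {N : ℕ} (α : ℝ) (hα : 0 < α) (hα1 : α ≠ 1) (c x u : Fin N → ℝ)
    (hc : ∀ i, 0 < c i) (hx : ∀ i, 0 < x i) (hN : Nonempty (Fin N)) :
    (α - 1)⁻¹ * (Real.log (∑ i, c i * (x i * Real.exp (u i)) ^ (1 - α)) -
        Real.log (∑ i, c i * x i ^ (1 - α))) ≤
      -(∑ i, (c i * x i ^ (1-α) / (∑ j, c j * x j ^ (1 - α))) * u i)
        + |1 - α| * (∑ i, (u i)^2) / 2 := by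
  obtain ⟨hS, hqpos, hq1⟩ := q_facts α c x hc hx hN
  set S := ∑ j, c j * x j ^ (1 - α) with hSdef
  set q : Fin N → ℝ := fun i => c i * x i ^ (1-α) / S with hqdef
  set v : Fin N → ℝ := fun i => (1 - α) * u i with hvdef
  have hSy : ∑ i, c i * (x i * Real.exp (u i)) ^ (1 - α)
      = S * ∑ i, q i * Real.exp (v i) := by
    rw [Finset.mul_sum]
    apply Finset.sum_congr rfl
    intro i _
    rw [Real.mul_rpow (hx i).le (Real.exp_pos _).le, ← Real.exp_mul, mul_comm (u i) (1-α)]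
    show _ = S * (c i * x i ^ (1-α) / S * Real.exp ((1-α) * u i))
    field_simp
  set Z := ∑ i, q i * Real.exp (v i) with hZdef
  have hZpos : 0 < Z :=
    Finset.sum_pos (fun i _ => mul_pos (hqpos i) (Real.exp_pos _)) univ_nonempty
  have hlogdiff : Real.log (∑ i, c i * (x i * Real.exp (u i)) ^ (1 - α)) - Real.log S
      = Real.log Z := by
    rw [hSy, Real.log_mul hS.ne' hZpos.ne']; ring
  rw [hlogdiff]
  have hne : (α:ℝ) - 1 ≠ 0 := sub_ne_zero.mpr hα1
  have hqv : ∀ i, q i * v i = (1-α) * (q i * u i) := fun i => by rw [hvdef]; ring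
  have hsumqv : ∑ i, q i * v i = (1-α) * ∑ i, q i * u i := by
    rw [Finset.mul_sum]; exact Finset.sum_congr rfl (fun i _ => hqv i)
  have hsumv2 : ∑ i, (v i)^2 = (1-α)^2 * ∑ i, (u i)^2 := by
    rw [Finset.mul_sum]; exact Finset.sum_congr rfl (fun i _ => by rw [hvdef]; ring)
  rcases lt_or_gt_of_ne hα1 with hlt | hgt
  · -- α < 1 : Jensen lower bound
    have hjen : ∑ i, q i * v i ≤ Real.log Z := by
      have := jensen_log q (fun i => Real.exp (v i)) (fun i => (hqpos i).le) hq1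
        (fun i => Real.exp_pos _)
      simpa [Real.log_exp] using this
    have hneg : (α-1)⁻¹ < 0 := inv_lt_zero.mpr (by linarith)
    have h1 := mul_le_mul_of_nonpos_left hjen hneg.le
    have h2 : (α-1)⁻¹ * ∑ i, q i * v i = -(∑ i, q i * u i) := by
      rw [hsumqv]
      field_simp
      ring
    have h3 : 0 ≤ |1 - α| * (∑ i, (u i)^2) / 2 := by
      apply div_nonneg _ (by norm_num)
      exact mul_nonneg (abs_nonneg _) (Finset.sum_nonneg (fun i _ => sq_nonneg _))
    linarith [h2 ▸ h1]
  · -- α > 1 : LSE smoothness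
    have hlse := lse_smooth q v hqpos hq1
    have hpos : (0:ℝ) ≤ (α-1)⁻¹ := (inv_pos.mpr (by linarith)).le
    have h1 := mul_le_mul_of_nonneg_left hlse hpos
    have habs : |1 - α| = α - 1 := by
      rw [abs_of_neg (by linarith : (1:ℝ) - α < 0)]; ring
    have h2 : (α-1)⁻¹ * ((∑ i, q i * v i) + (∑ i, (v i)^2)/2)
        = -(∑ i, q i * u i) + (α-1) * (∑ i, (u i)^2)/2 := by
      rw [hsumqv, hsumv2]
      field_simp
      ring
    rw [habs]
    linarith [h2 ▸ h1]

lemma falpha_scale {N M : ℕ} (α : ℝ) (hα1 : α ≠ 1) (w : Fin M → ℝ) (hw1 : ∑ k, w k = 1)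
    (p : Fin M → Fin N → ℝ) (hp : ∀ k i, 0 < p k i) (y : Fin N → ℝ) (hy : ∀ i, 0 < y i)
    (s : ℝ) (hs : 0 < s) (hN : Nonempty (Fin N)) :
    falpha α w p (fun i => y i / s) = falpha α w p y + Real.log s := by
  have hne : (α:ℝ) - 1 ≠ 0 := sub_ne_zero.mpr hα1
  have hc : ∀ k i, 0 < p k i ^ α := fun k i => Real.rpow_pos_of_pos (hp k i) α
  have hS : ∀ k, 0 < ∑ i, p k i ^ α * y i ^ (1 - α) := fun k =>
    Finset.sum_pos (fun i _ => mul_pos (hc k i) (Real.rpow_pos_of_pos (hy i) _)) univ_nonempty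
  rw [falpha, falpha]
  have hper : ∀ k, w k * ((α - 1)⁻¹ * Real.log (∑ i, p k i ^ α * (y i / s) ^ (1 - α)))
      = w k * ((α - 1)⁻¹ * Real.log (∑ i, p k i ^ α * y i ^ (1 - α))) + w k * Real.log s := by
    intro k
    have hSy : ∑ i, p k i ^ α * (y i / s) ^ (1-α)
        = (∑ i, p k i ^ α * y i ^ (1-α)) / s ^ ((1:ℝ)-α) := by
      rw [Finset.sum_div]
      apply Finset.sum_congr rfl
      intro i _
      rw [Real.div_rpow (hy i).le hs.le]
      ring
    rw [hSy, Real.log_div (hS k).ne' (Real.rpow_pos_of_pos hs _).ne', Real.log_rpow hs]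
    field_simp
    ring
  rw [Finset.sum_congr rfl (fun k _ => hper k), Finset.sum_add_distrib, ← Finset.sum_mul,
    hw1, one_mul]

lemma rate (δ : ℕ → ℝ) (D : ℝ) (hD : 0 ≤ D) (hnn : ∀ t, 0 ≤ δ t)
    (hmono : ∀ t, δ (t+1) ≤ δ t) (hrec : ∀ t, δ t ^ 2 ≤ D * (δ t - δ (t+1)))
    (T : ℕ) : δ T * T ≤ D := by
  have key : ∀ t : ℕ, (t:ℝ) * δ t ≤ D := by
    intro t
    induction t with
    | zero => simpa using hD
    | succ t ih =>
      rcases le_or_gt (δ (t+1)) 0 with h0 | h0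
      · have : δ (t+1) = 0 := le_antisymm h0 (hnn (t+1))
        rw [this]; simpa using hD
      · have hδt : 0 < δ t := lt_of_lt_of_le h0 (hmono t)
        have h1 := hrec t
        have h2 : ((t:ℝ)+1) * δ (t+1) * δ t ≤ D * δ t := by
          nlinarith [mul_le_mul_of_nonneg_right ih (hnn (t+1)), hmono t, hnn (t+1)]
        have := (mul_le_mul_iff_of_pos_right hδt).mp h2
        push_cast
        linarith
  have := key T
  linarith [this]

section grad
variable {N M : ℕ} (α : ℝ) (w : Fin M → ℝ) (p : Fin M → Fin N → ℝ)

/-- derivative of `x ↦ S k x = ∑ j, p k j ^ α * x j ^ (1-α)`. -/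
lemma S_hasFDerivAt (k : Fin M) (x : Fin N → ℝ) (hx : ∀ i, 0 < x i) :
    HasFDerivAt (fun y : Fin N → ℝ => ∑ j, p k j ^ α * y j ^ (1 - α))
      (∑ j, (p k j ^ α * ((1 - α) * x j ^ (1 - α - 1))) •
        (ContinuousLinearMap.proj j : (Fin N → ℝ) →L[ℝ] ℝ)) x := by
  apply HasFDerivAt.fun_sum
  intro j _
  have h1 : HasFDerivAt (fun y : Fin N → ℝ => y j)
      (ContinuousLinearMap.proj j : (Fin N → ℝ) →L[ℝ] ℝ) x :=
    (ContinuousLinearMap.proj j : (Fin N → ℝ) →L[ℝ] ℝ).hasFDerivAt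
  have h2 : HasDerivAt (fun t : ℝ => t ^ (1 - α)) ((1 - α) * x j ^ (1 - α - 1)) (x j) :=
    Real.hasDerivAt_rpow_const (Or.inl (hx j).ne')
  have h3 := h2.comp_hasFDerivAt x h1
  have := h3.const_mul (p k j ^ α)
  convert this using 1
  · rfl
  · rfl
  rw [smul_smul]

lemma galpha_hasFDerivAt (x : Fin N → ℝ) (hx : ∀ i, 0 < x i)
    (hS : ∀ k, 0 < ∑ j, p k j ^ α * x j ^ (1 - α)) :
    HasFDerivAt (galpha α w p)
      ((∑ j, (ContinuousLinearMap.proj j : (Fin N → ℝ) →L[ℝ] ℝ)) +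
        ∑ k, (w k * ((α - 1)⁻¹ * (∑ j, p k j ^ α * x j ^ (1 - α))⁻¹)) •
          (∑ j, (p k j ^ α * ((1 - α) * x j ^ (1 - α - 1))) •
            (ContinuousLinearMap.proj j : (Fin N → ℝ) →L[ℝ] ℝ))) x := by
  have hlin : HasFDerivAt (fun y : Fin N → ℝ => ∑ j, y j)
      (∑ j, (ContinuousLinearMap.proj j : (Fin N → ℝ) →L[ℝ] ℝ)) x := by
    apply HasFDerivAt.fun_sum
    intro j _
    exact (ContinuousLinearMap.proj j : (Fin N → ℝ) →L[ℝ] ℝ).hasFDerivAt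
  have hf : HasFDerivAt (falpha α w p)
      (∑ k, (w k * ((α - 1)⁻¹ * (∑ j, p k j ^ α * x j ^ (1 - α))⁻¹)) •
          (∑ j, (p k j ^ α * ((1 - α) * x j ^ (1 - α - 1))) •
            (ContinuousLinearMap.proj j : (Fin N → ℝ) →L[ℝ] ℝ))) x := by
    apply HasFDerivAt.fun_sum
    intro k _
    have hlog := (Real.hasDerivAt_log (hS k).ne').comp_hasFDerivAt x (S_hasFDerivAt α p k x hx)
    have h2 := hlog.const_mul (w k * (α - 1)⁻¹)
    have heq : (fun y : Fin N → ℝ =>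
        w k * ((α-1)⁻¹ * Real.log (∑ j, p k j ^ α * y j ^ (1 - α))))
        = fun y : Fin N → ℝ =>
          (w k * (α - 1)⁻¹) * Real.log (∑ j, p k j ^ α * y j ^ (1 - α)) := by
      funext y; ring
    rw [heq]
    convert h2 using 1
    · rfl
    · rfl
    rw [smul_smul]
    congr 1
    ring
  exact hlin.add hf

lemma galpha_grad (x : Fin N → ℝ) (hx : ∀ i, 0 < x i)
    (hS : ∀ k, 0 < ∑ j, p k j ^ α * x j ^ (1 - α)) (i : Fin N) :
    fderiv ℝ (galpha α w p) x (Pi.single i 1) =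
      1 - ∑ k, w k * ((α - 1)⁻¹ * ((∑ j, p k j ^ α * x j ^ (1 - α))⁻¹ *
        (p k i ^ α * ((α - 1) * x i ^ (-α))))) := by
  rw [(galpha_hasFDerivAt α w p x hx hS).fderiv]
  simp only [ContinuousLinearMap.add_apply, ContinuousLinearMap.sum_apply,
    ContinuousLinearMap.smul_apply, ContinuousLinearMap.proj_apply, smul_eq_mul,
    Pi.single_apply, mul_ite, mul_one, mul_zero]
  rw [Finset.sum_ite_eq' univ i (fun _ => (1:ℝ))]
  simp only [mem_univ, if_true]
  rw [Finset.sum_congr rfl (fun k (_ : k ∈ univ) => congrArg _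
    (Finset.sum_ite_eq' univ i (fun j => p k j ^ α * ((1 - α) * x j ^ (1 - α - 1)))))]
  simp only [mem_univ, if_true]
  have hexp : (1:ℝ) - α - 1 = -α := by ring
  rw [hexp, sub_eq_add_neg]
  congr 1
  rw [← Finset.sum_neg_distrib]
  exact Finset.sum_congr rfl fun k _ => by ring
end grad

section main
variable {N M : ℕ} (α : ℝ) (w : Fin M → ℝ) (p : Fin M → Fin N → ℝ)

/-- Convexity inequality for `galpha`. -/
lemma conv_galpha (hα : 0 < α) (hα1 : α ≠ 1) (hw : ∀ k, 0 ≤ w k)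
    (hp : ∀ k i, 0 < p k i) (x y : Fin N → ℝ) (hx : ∀ i, 0 < x i) (hy : ∀ i, 0 < y i)
    (hN : Nonempty (Fin N)) :
    galpha α w p x - galpha α w p y ≤
      ∑ i, (x i - ∑ k, w k * (p k i ^ α * x i ^ (1-α) /
          (∑ j, p k j ^ α * x j ^ (1 - α)))) * (1 - y i / x i) := by
  have hc : ∀ k i, 0 < p k i ^ α := fun k i => Real.rpow_pos_of_pos (hp k i) α
  have hperk : ∀ k, (α - 1)⁻¹ * (Real.log (∑ i, p k i ^ α * x i ^ (1 - α)) -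
      Real.log (∑ i, p k i ^ α * y i ^ (1 - α))) ≤
      ∑ i, (p k i ^ α * x i ^ (-α) * (y i - x i)) / (∑ j, p k j ^ α * x j ^ (1 - α)) := by
    intro k
    have := perk_conv α hα hα1 (fun i => p k i ^ α) x y (hc k) hx hy hN
    linarith
  -- rewrite the per-i linear terms
  have hterm : ∀ k i, (p k i ^ α * x i ^ (-α) * (y i - x i)) / (∑ j, p k j ^ α * x j ^ (1 - α))
      = (p k i ^ α * x i ^ (1-α) / (∑ j, p k j ^ α * x j ^ (1 - α))) * (y i / x i - 1) := by
    intro k i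
    have hS : 0 < ∑ j, p k j ^ α * x j ^ (1 - α) :=
      Finset.sum_pos (fun j _ => mul_pos (hc k j) (Real.rpow_pos_of_pos (hx j) _)) univ_nonempty
    rw [div_mul_eq_mul_div, div_eq_div_iff hS.ne' hS.ne']
    have h1 : x i ^ (-α) * x i = x i ^ (1-α) := by
      rw [sub_eq_add_neg, Real.rpow_add (hx i), Real.rpow_one, mul_comm]
    have h2 : x i ^ (-α) * y i = x i ^ (1-α) * (y i / x i) := by
      have hyi : y i = x i * (y i / x i) := by
        rw [mul_comm]; exact (div_mul_cancel₀ (y i) (hx i).ne').symm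
      calc x i ^ (-α) * y i = x i ^ (-α) * (x i * (y i / x i)) := by rw [← hyi]
        _ = (x i ^ (-α) * x i) * (y i / x i) := by ring
        _ = x i ^ (1-α) * (y i / x i) := by rw [h1]
    linear_combination (p k i ^ α * (∑ j, p k j ^ α * x j ^ (1 - α))) * h2
      - (p k i ^ α * (∑ j, p k j ^ α * x j ^ (1 - α))) * h1
  -- expand galpha difference
  rw [galpha, galpha, falpha, falpha]
  have hfdiff : ∑ k, w k * ((α - 1)⁻¹ * Real.log (∑ i, p k i ^ α * x i ^ (1 - α)))
      - ∑ k, w k * ((α - 1)⁻¹ * Real.log (∑ i, p k i ^ α * y i ^ (1 - α)))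
      ≤ ∑ k, w k * ∑ i, (p k i ^ α * x i ^ (1-α) / (∑ j, p k j ^ α * x j ^ (1 - α)))
          * (y i / x i - 1) := by
    rw [← Finset.sum_sub_distrib]
    apply Finset.sum_le_sum
    intro k _
    have h1 := hperk k
    rw [Finset.sum_congr rfl (fun i _ => hterm k i)] at h1
    calc w k * ((α - 1)⁻¹ * Real.log (∑ i, p k i ^ α * x i ^ (1 - α)))
          - w k * ((α - 1)⁻¹ * Real.log (∑ i, p k i ^ α * y i ^ (1 - α)))
        = w k * ((α - 1)⁻¹ * (Real.log (∑ i, p k i ^ α * x i ^ (1 - α))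
            - Real.log (∑ i, p k i ^ α * y i ^ (1 - α)))) := by ring
      _ ≤ w k * ∑ i, (p k i ^ α * x i ^ (1-α) / (∑ j, p k j ^ α * x j ^ (1 - α)))
          * (y i / x i - 1) := by
          apply mul_le_mul_of_nonneg_left _ (hw k)
          exact h1
  have hswap : ∑ k, w k * ∑ i, (p k i ^ α * x i ^ (1-α) / (∑ j, p k j ^ α * x j ^ (1 - α)))
      * (y i / x i - 1)
      = ∑ i, (∑ k, w k * (p k i ^ α * x i ^ (1-α) / (∑ j, p k j ^ α * x j ^ (1 - α))))
          * (y i / x i - 1) := by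
    calc ∑ k, w k * ∑ i, (p k i ^ α * x i ^ (1-α) / (∑ j, p k j ^ α * x j ^ (1 - α)))
          * (y i / x i - 1)
        = ∑ k, ∑ i, w k * ((p k i ^ α * x i ^ (1-α) / (∑ j, p k j ^ α * x j ^ (1 - α)))
          * (y i / x i - 1)) := by
          exact Finset.sum_congr rfl (fun k _ => Finset.mul_sum _ _ _)
      _ = ∑ i, ∑ k, w k * ((p k i ^ α * x i ^ (1-α) / (∑ j, p k j ^ α * x j ^ (1 - α)))
          * (y i / x i - 1)) := Finset.sum_comm
      _ = ∑ i, (∑ k, w k * (p k i ^ α * x i ^ (1-α) / (∑ j, p k j ^ α * x j ^ (1 - α))))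
          * (y i / x i - 1) := by
          apply Finset.sum_congr rfl
          intro i _
          rw [Finset.sum_mul]
          exact Finset.sum_congr rfl (fun k _ => by ring)
  rw [hswap] at hfdiff
  have hRHS : ∑ i, (x i - ∑ k, w k * (p k i ^ α * x i ^ (1-α) /
        (∑ j, p k j ^ α * x j ^ (1 - α)))) * (1 - y i / x i)
      = (∑ i, (x i - y i)) + ∑ i, (∑ k, w k * (p k i ^ α * x i ^ (1-α) /
        (∑ j, p k j ^ α * x j ^ (1 - α)))) * (y i / x i - 1) := by
    rw [← Finset.sum_add_distrib]
    apply Finset.sum_congr rfl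
    intro i _
    have hxy : x i * (y i / x i) = y i := by
      rw [mul_comm]; exact div_mul_cancel₀ (y i) (hx i).ne'
    linear_combination -hxy
  have hlinpart : (∑ i, x i) - (∑ i, y i) = ∑ i, (x i - y i) := by
    rw [Finset.sum_sub_distrib]
  rw [hRHS]
  linarith

/-- Descent (smoothness) inequality for `galpha` along the multiplicative step. -/
lemma descent_galpha (hα : 0 < α) (hα1 : α ≠ 1) (hw : ∀ k, 0 ≤ w k) (hw1 : ∑ k, w k = 1)
    (hp : ∀ k i, 0 < p k i) (x u : Fin N → ℝ) (hx : ∀ i, 0 < x i) (hx1 : ∀ i, x i ≤ 1)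
    (hxu : ∀ i, x i * Real.exp (u i) ≤ 1) (hN : Nonempty (Fin N)) :
    galpha α w p (fun i => x i * Real.exp (u i)) ≤ galpha α w p x
      + ∑ i, (x i - ∑ k, w k * (p k i ^ α * x i ^ (1-α) /
          (∑ j, p k j ^ α * x j ^ (1 - α)))) * u i
      + (|1 - α| + 1) * (∑ i, (u i)^2) / 2 := by
  have hc : ∀ k i, 0 < p k i ^ α := fun k i => Real.rpow_pos_of_pos (hp k i) α
  have hlin : ∑ i, x i * Real.exp (u i) ≤ (∑ i, x i) + (∑ i, x i * u i)
      + (∑ i, (u i)^2) / 2 := by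
    rw [Finset.sum_div, ← Finset.sum_add_distrib, ← Finset.sum_add_distrib]
    exact Finset.sum_le_sum (fun i _ => expA (hx i) (hx1 i) (hxu i))
  have hfdiff : falpha α w p (fun i => x i * Real.exp (u i)) - falpha α w p x
      ≤ -(∑ i, (∑ k, w k * (p k i ^ α * x i ^ (1-α) /
          (∑ j, p k j ^ α * x j ^ (1 - α)))) * u i) + |1 - α| * (∑ i, (u i)^2) / 2 := by
    have hperk : ∀ k, (α - 1)⁻¹ * (Real.log (∑ i, p k i ^ α * (x i * Real.exp (u i)) ^ (1 - α))
        - Real.log (∑ i, p k i ^ α * x i ^ (1 - α))) ≤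
        -(∑ i, (p k i ^ α * x i ^ (1-α) / (∑ j, p k j ^ α * x j ^ (1 - α))) * u i)
          + |1 - α| * (∑ i, (u i)^2) / 2 :=
      fun k => perk_smooth α hα hα1 (fun i => p k i ^ α) x u (hc k) hx hN
    rw [falpha, falpha, ← Finset.sum_sub_distrib]
    calc ∑ k, (w k * ((α - 1)⁻¹ * Real.log (∑ i, p k i ^ α * (x i * Real.exp (u i)) ^ (1 - α)))
          - w k * ((α - 1)⁻¹ * Real.log (∑ i, p k i ^ α * x i ^ (1 - α))))
        ≤ ∑ k, w k * (-(∑ i, (p k i ^ α * x i ^ (1-α) / (∑ j, p k j ^ α * x j ^ (1 - α))) * u i)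
          + |1 - α| * (∑ i, (u i)^2) / 2) := by
          apply Finset.sum_le_sum
          intro k _
          have h1 := hperk k
          calc w k * ((α - 1)⁻¹ * Real.log (∑ i, p k i ^ α * (x i * Real.exp (u i)) ^ (1 - α)))
              - w k * ((α - 1)⁻¹ * Real.log (∑ i, p k i ^ α * x i ^ (1 - α)))
              = w k * ((α - 1)⁻¹ * (Real.log (∑ i, p k i ^ α * (x i * Real.exp (u i)) ^ (1 - α))
                - Real.log (∑ i, p k i ^ α * x i ^ (1 - α)))) := by ring
            _ ≤ w k * (-(∑ i, (p k i ^ α * x i ^ (1-α) /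
                (∑ j, p k j ^ α * x j ^ (1 - α))) * u i)
                + |1 - α| * (∑ i, (u i)^2) / 2) := mul_le_mul_of_nonneg_left h1 (hw k)
      _ = ∑ k, (w k * (-(∑ i, (p k i ^ α * x i ^ (1-α) /
            (∑ j, p k j ^ α * x j ^ (1 - α))) * u i))) + (∑ k, w k) * (|1 - α| * (∑ i, (u i)^2) / 2) := by
          rw [Finset.sum_mul, ← Finset.sum_add_distrib]
          exact Finset.sum_congr rfl (fun k _ => by ring)
      _ = -(∑ i, (∑ k, w k * (p k i ^ α * x i ^ (1-α) /
            (∑ j, p k j ^ α * x j ^ (1 - α)))) * u i) + |1 - α| * (∑ i, (u i)^2) / 2 := by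
          rw [hw1, one_mul]
          congr 1
          have hpos : ∑ k, w k * (∑ i, (p k i ^ α * x i ^ (1-α) /
              (∑ j, p k j ^ α * x j ^ (1 - α))) * u i)
              = ∑ i, (∑ k, w k * (p k i ^ α * x i ^ (1-α) /
              (∑ j, p k j ^ α * x j ^ (1 - α)))) * u i := by
            simp only [Finset.mul_sum, Finset.sum_mul]
            rw [Finset.sum_comm]
            exact Finset.sum_congr rfl (fun i _ => Finset.sum_congr rfl (fun k _ => by ring))
          rw [← hpos]
          simp only [mul_neg]
          rw [Finset.sum_neg_distrib]
  have hsplit : ∑ i, (x i - ∑ k, w k * (p k i ^ α * x i ^ (1-α) /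
        (∑ j, p k j ^ α * x j ^ (1 - α)))) * u i
      = (∑ i, x i * u i) - ∑ i, (∑ k, w k * (p k i ^ α * x i ^ (1-α) /
        (∑ j, p k j ^ α * x j ^ (1 - α)))) * u i := by
    rw [← Finset.sum_sub_distrib]
    exact Finset.sum_congr rfl (fun i _ => by ring)
  rw [galpha, galpha, hsplit]
  have habs : (|1 - α| + 1) * (∑ i, (u i)^2) / 2
      = |1 - α| * (∑ i, (u i)^2) / 2 + (∑ i, (u i)^2) / 2 := by ring
  rw [habs]
  linarith

end main


/-- Non-asymptotic rate for the normalized RGD iterates: for `x_{t+1} = x_t ⊙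
exp(-(1/(|1-α|+1)) x_t ⊙ ∇g_α(x_t))` started in the relative interior of the simplex,
`f_α(x̄_T) - f_α(x*) ≤ (2(|1-α|+1)/T) ⋅ sup_t ‖x* ⊘ x_t - 1‖₂²`, where `x*` minimizes `f_α`
over the simplex and `x̄ = x/‖x‖₁`. -/
theorem stmt_18 (N M : ℕ) (α : ℝ) (hα : 0 < α) (hα1 : α ≠ 1)
    (w : Fin M → ℝ) (hw : ∀ k, 0 ≤ w k) (hw1 : ∑ k, w k = 1)
    (p : Fin M → Fin N → ℝ) (hp : ∀ k, (∀ i, 0 < p k i) ∧ ∑ i, p k i = 1)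
    (x : ℕ → Fin N → ℝ) (h1 : (∀ i, 0 < x 0 i) ∧ ∑ i, x 0 i = 1)
    (hrec : ∀ t i, x (t + 1) i = x t i *
      Real.exp (-(|1 - α| + 1)⁻¹ * (x t i * fderiv ℝ (galpha α w p) (x t) (Pi.single i 1))))
    (xs : Fin N → ℝ) (hxs : (∀ i, 0 < xs i) ∧ ∑ i, xs i = 1)
    (hmin : ∀ z : Fin N → ℝ, ((∀ i, 0 < z i) ∧ ∑ i, z i = 1) →
      falpha α w p xs ≤ falpha α w p z)
    (C : ℝ) (hC : ∀ t, ∑ i, (xs i / x t i - 1) ^ 2 ≤ C)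
    (T : ℕ) (hT : 0 < T) :
    falpha α w p (fun i => x T i / ∑ j, x T j) - falpha α w p xs
      ≤ 2 * (|1 - α| + 1) / T * C := by
  obtain ⟨hx0pos, hx0sum⟩ := h1
  obtain ⟨hxspos, hxssum⟩ := hxs
  have hppos : ∀ k i, 0 < p k i := fun k => (hp k).1
  have hN : Nonempty (Fin N) := by
    rcases Nat.eq_zero_or_pos N with h | h
    · subst h
      simp at hx0sum
    · exact ⟨⟨0, h⟩⟩
  set L := |1 - α| + 1 with hL
  have hLpos : 0 < L := by rw [hL]; positivity
  have hL1 : 1 ≤ L := by rw [hL]; exact le_add_of_nonneg_left (abs_nonneg _)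
  clear_value L
  have hLne : L ≠ 0 := hLpos.ne'
  have hne : (α:ℝ) - 1 ≠ 0 := sub_ne_zero.mpr hα1
  set r : (Fin N → ℝ) → Fin N → ℝ := fun y i =>
    ∑ k, w k * (p k i ^ α * y i ^ (1-α) / (∑ j, p k j ^ α * y j ^ (1 - α))) with hrdef
  have hc : ∀ k i, 0 < p k i ^ α := fun k i => Real.rpow_pos_of_pos (hppos k i) α
  have hSpos : ∀ (y : Fin N → ℝ), (∀ i, 0 < y i) →
      ∀ k, 0 < ∑ j, p k j ^ α * y j ^ (1 - α) := by
    intro y hy k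
    exact Finset.sum_pos (fun j _ => mul_pos (hc k j) (Real.rpow_pos_of_pos (hy j) _))
      univ_nonempty
  -- bounds on r
  have hrb : ∀ (y : Fin N → ℝ), (∀ i, 0 < y i) → ∀ i, 0 ≤ r y i ∧ r y i ≤ 1 := by
    intro y hy i
    have hq1 : ∀ k, p k i ^ α * y i ^ (1-α) / (∑ j, p k j ^ α * y j ^ (1 - α)) ≤ 1 := by
      intro k
      rw [div_le_one (hSpos y hy k)]
      exact Finset.single_le_sum (f := fun j => p k j ^ α * y j ^ (1-α))
        (fun j _ => (mul_pos (hc k j) (Real.rpow_pos_of_pos (hy j) _)).le) (mem_univ i)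
    constructor
    · apply Finset.sum_nonneg
      intro k _
      exact mul_nonneg (hw k) (div_pos (mul_pos (hc k i)
        (Real.rpow_pos_of_pos (hy i) _)) (hSpos y hy k)).le
    · calc r y i ≤ ∑ k, w k * 1 :=
            Finset.sum_le_sum (fun k _ => mul_le_mul_of_nonneg_left (hq1 k) (hw k))
        _ = 1 := by simp [hw1]
  -- gradient identity
  have hgrad : ∀ (y : Fin N → ℝ), (∀ i, 0 < y i) → ∀ i,
      y i * fderiv ℝ (galpha α w p) y (Pi.single i 1) = y i - r y i := by
    intro y hy i
    rw [galpha_grad α w p y hy (hSpos y hy) i, hrdef]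
    have hterm : ∀ k, y i * (w k * ((α - 1)⁻¹ * ((∑ j, p k j ^ α * y j ^ (1 - α))⁻¹ *
        (p k i ^ α * ((α - 1) * y i ^ (-α))))))
        = w k * (p k i ^ α * y i ^ (1-α) / (∑ j, p k j ^ α * y j ^ (1 - α))) := by
      intro k
      have h1 : y i ^ (-α) * y i = y i ^ (1-α) := by
        rw [sub_eq_add_neg, Real.rpow_add (hy i), Real.rpow_one, mul_comm]
      have h2 : (α - 1)⁻¹ * (α - 1) = 1 := inv_mul_cancel₀ hne
      rw [div_eq_mul_inv]
      linear_combination (w k * p k i ^ α * (∑ j, p k j ^ α * y j ^ (1 - α))⁻¹ * (α-1)⁻¹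
          * (α-1)) * h1
        + (w k * p k i ^ α * (∑ j, p k j ^ α * y j ^ (1 - α))⁻¹ * y i ^ (1-α)) * h2
    calc y i * (1 - ∑ k, w k * ((α - 1)⁻¹ * ((∑ j, p k j ^ α * y j ^ (1 - α))⁻¹ *
          (p k i ^ α * ((α - 1) * y i ^ (-α))))))
        = y i - ∑ k, y i * (w k * ((α - 1)⁻¹ * ((∑ j, p k j ^ α * y j ^ (1 - α))⁻¹ *
          (p k i ^ α * ((α - 1) * y i ^ (-α)))))) := by
          rw [mul_sub, mul_one, Finset.mul_sum]
      _ = y i - ∑ k, w k * (p k i ^ α * y i ^ (1-α) / (∑ j, p k j ^ α * y j ^ (1 - α))) := by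
          rw [Finset.sum_congr rfl (fun k _ => hterm k)]
  -- invariants
  have hinv : ∀ t, (∀ i, 0 < x t i) ∧ (∀ i, x t i ≤ 1) := by
    intro t
    induction t with
    | zero =>
      refine ⟨hx0pos, fun i => ?_⟩
      rw [← hx0sum]
      exact Finset.single_le_sum (fun j _ => (hx0pos j).le) (mem_univ i)
    | succ t ih =>
      obtain ⟨hpos, hle⟩ := ih
      have hrec' : ∀ i, x (t+1) i = x t i * Real.exp (-L⁻¹ * (x t i - r (x t) i)) := by
        intro i
        rw [hrec t i, hgrad (x t) hpos i]
      have hxle : ∀ i, x (t+1) i ≤ 1 := by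
        intro i
        rw [hrec' i]
        have hr1 := (hrb (x t) hpos i).2
        have hinvle : L⁻¹ ≤ 1 := inv_le_one_of_one_le₀ hL1
        have hinvpos : 0 < L⁻¹ := inv_pos.mpr hLpos
        have h1 : -L⁻¹ * (x t i - r (x t) i) ≤ 1 - x t i := by
          nlinarith [hle i]
        have hexple : Real.exp (-L⁻¹ * (x t i - r (x t) i)) ≤ Real.exp (1 - x t i) :=
          Real.exp_le_exp.mpr h1
        have h2 : Real.exp (1 - x t i) ≤ (x t i)⁻¹ := by
          rw [show (x t i)⁻¹ = Real.exp (-Real.log (x t i)) by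
            rw [Real.exp_neg, Real.exp_log (hpos i)]]
          exact Real.exp_le_exp.mpr (by linarith [Real.log_le_sub_one_of_pos (hpos i)])
        calc x t i * Real.exp (-L⁻¹ * (x t i - r (x t) i))
            ≤ x t i * (x t i)⁻¹ :=
              mul_le_mul_of_nonneg_left (hexple.trans h2) (hpos i).le
          _ = 1 := mul_inv_cancel₀ (hpos i).ne'
      exact ⟨fun i => by rw [hrec' i]; exact mul_pos (hpos i) (Real.exp_pos _), hxle⟩
  have hpos : ∀ t i, 0 < x t i := fun t => (hinv t).1
  have hle1 : ∀ t i, x t i ≤ 1 := fun t => (hinv t).2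
  have hrec' : ∀ t i, x (t+1) i = x t i * Real.exp (-L⁻¹ * (x t i - r (x t) i)) := by
    intro t i
    rw [hrec t i, hgrad (x t) (hpos t) i]
  -- energy and descent
  set δ : ℕ → ℝ := fun t => galpha α w p (x t) - galpha α w p xs with hδdef
  set H : ℕ → ℝ := fun t => ∑ i, (x t i - r (x t) i)^2 with hHdef
  clear_value δ H
  have hHnn : ∀ t, 0 ≤ H t := by
    intro t
    simp only [hHdef]
    exact Finset.sum_nonneg (fun i _ => sq_nonneg _)
  have hdescent : ∀ t, δ (t+1) ≤ δ t - H t / (2*L) := by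
    intro t
    have hxu : ∀ i, x t i * Real.exp (-L⁻¹ * (x t i - r (x t) i)) ≤ 1 := by
      intro i
      rw [← hrec' t i]
      exact hle1 (t+1) i
    have hdg := descent_galpha α w p hα hα1 hw hw1 hppos (x t)
      (fun i => -L⁻¹ * (x t i - r (x t) i)) (hpos t) (hle1 t) hxu hN
    rw [← hL] at hdg
    have hxt1 : (fun i => x t i * Real.exp (-L⁻¹ * (x t i - r (x t) i))) = x (t+1) :=
      funext fun i => (hrec' t i).symm
    rw [hxt1] at hdg
    have h1 : ∑ i, (x t i - r (x t) i) * (-L⁻¹ * (x t i - r (x t) i)) = -L⁻¹ * H t := by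
      simp only [hHdef]
      rw [Finset.mul_sum]
      exact Finset.sum_congr rfl (fun i _ => by ring)
    have h2 : ∑ i, (-L⁻¹ * (x t i - r (x t) i))^2 = L⁻¹^2 * H t := by
      simp only [hHdef]
      rw [Finset.mul_sum]
      exact Finset.sum_congr rfl (fun i _ => by ring)
    have hrw : ∀ i, x t i - ∑ k, w k * (p k i ^ α * x t i ^ (1-α) /
        (∑ j, p k j ^ α * x t j ^ (1 - α))) = x t i - r (x t) i := fun i => rfl
    rw [Finset.sum_congr rfl (fun i (_ : i ∈ univ) => by rw [hrw i]), h1] at hdg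
    rw [Finset.sum_congr rfl (fun i (_ : i ∈ univ) => rfl), h2] at hdg
    have halg : -L⁻¹ * H t + L * (L⁻¹^2 * H t) / 2 = -(H t / (2*L)) := by
      field_simp
      ring
    rw [add_assoc, halg] at hdg
    rw [hδdef]
    simp only []
    linarith [hdg]
  have hmono : ∀ t, δ (t+1) ≤ δ t := by
    intro t
    have h2 : 0 ≤ H t / (2*L) := div_nonneg (hHnn t) (by linarith)
    exact (hdescent t).trans (sub_le_self _ h2)
  -- normalization facts
  have hsum_pos : ∀ t, 0 < ∑ j, x t j :=
    fun t => Finset.sum_pos (fun j _ => hpos t j) univ_nonempty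
  have hbar : ∀ t, falpha α w p (fun i => x t i / ∑ j, x t j)
      = falpha α w p (x t) + Real.log (∑ j, x t j) := by
    intro t
    exact falpha_scale α hα1 w hw1 p hppos (x t) (hpos t) _ (hsum_pos t) hN
  have hbar_mem : ∀ t, (∀ i, 0 < x t i / ∑ j, x t j) ∧ (∑ i, x t i / ∑ j, x t j) = 1 := by
    intro t
    refine ⟨fun i => div_pos (hpos t i) (hsum_pos t), ?_⟩
    rw [← Finset.sum_div, div_self (hsum_pos t).ne']
  have hgxs : galpha α w p xs = 1 + falpha α w p xs := by
    rw [galpha, hxssum]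
  have hδlow : ∀ t, 0 ≤ δ t ∧
      falpha α w p (fun i => x t i / ∑ j, x t j) - falpha α w p xs ≤ δ t := by
    intro t
    have hlog := Real.log_le_sub_one_of_pos (hsum_pos t)
    have hmin' := hmin _ (hbar_mem t)
    rw [hbar t] at hmin'
    have e1 : δ t = (∑ j, x t j) + falpha α w p (x t) - 1 - falpha α w p xs := by
      rw [hδdef]
      simp only []
      rw [galpha, hgxs]
      ring
    constructor
    · rw [e1]; linarith
    · rw [hbar t, e1]; linarith
  -- key recursion
  have hC0 : 0 ≤ C :=
    le_trans (Finset.sum_nonneg (fun i _ => sq_nonneg _)) (hC 0)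
  have hkey : ∀ t, δ t ^ 2 ≤ (2*L*C) * (δ t - δ (t+1)) := by
    intro t
    have hconv := conv_galpha α w p hα hα1 hw hppos (x t) xs (hpos t) hxspos hN
    have hδt : δ t ≤ ∑ i, (x t i - r (x t) i) * (1 - xs i / x t i) := by
      rw [hδdef]
      simp only []
      exact hconv
    have hsb : ∑ i, (1 - xs i / x t i)^2 ≤ C := by
      have : ∑ i, (1 - xs i / x t i)^2 = ∑ i, (xs i / x t i - 1)^2 :=
        Finset.sum_congr rfl (fun i _ => by ring)
      rw [this]
      exact hC t
    have hcs : (∑ i, (x t i - r (x t) i) * (1 - xs i / x t i))^2 ≤ H t * C := by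
      calc (∑ i, (x t i - r (x t) i) * (1 - xs i / x t i))^2
          ≤ (∑ i, (x t i - r (x t) i)^2) * (∑ i, (1 - xs i / x t i)^2) :=
            Finset.sum_mul_sq_le_sq_mul_sq univ _ _
        _ ≤ H t * C := by
            simp only [hHdef]
            exact mul_le_mul_of_nonneg_left hsb
              (Finset.sum_nonneg (fun i _ => sq_nonneg _))
    have h0 := (hδlow t).1
    have hsq : δ t ^ 2 ≤ H t * C := by
      have h3 : δ t * δ t ≤ (∑ i, (x t i - r (x t) i) * (1 - xs i / x t i)) *
          (∑ i, (x t i - r (x t) i) * (1 - xs i / x t i)) :=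
        mul_self_le_mul_self h0 hδt
      calc δ t ^ 2 = δ t * δ t := sq (δ t) ▸ by ring
        _ ≤ _ := h3
        _ = (∑ i, (x t i - r (x t) i) * (1 - xs i / x t i))^2 := by ring
        _ ≤ H t * C := hcs
    have hHle : H t ≤ 2*L*(δ t - δ (t+1)) := by
      have h3 := hdescent t
      have h2L : (0:ℝ) < 2*L := by linarith
      have h4 : H t / (2*L) ≤ δ t - δ (t+1) := by linarith
      have h5 := (div_le_iff₀ h2L).mp h4
      exact h5.trans_eq (by ring)
    calc δ t ^2 ≤ H t * C := hsq
      _ ≤ (2*L*(δ t - δ (t+1))) * C := mul_le_mul_of_nonneg_right hHle hC0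
      _ = (2*L*C) * (δ t - δ (t+1)) := by ring
  have hrate := rate δ (2*L*C) (by positivity) (fun t => (hδlow t).1) hmono hkey T
  have hTpos : (0:ℝ) < (T:ℝ) := by exact_mod_cast hT
  calc falpha α w p (fun i => x T i / ∑ j, x T j) - falpha α w p xs
      ≤ δ T := (hδlow T).2
    _ ≤ 2*L*C / T := by
        rw [le_div_iff₀ hTpos]
        linarith [hrate]
    _ = 2 * L / T * C := by ring
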